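/- Let Ω be a set, k : Ω × Ω → ℝ, x₁, …, xₙ ∈ Ω, Y ∈ ℝⁿ, and h_ini : Ω → ℝ. Suppose h₁ : Ω × [0, ∞) → ℝ solves the mean-squared-error kernel flow with labels Y and zero initial function (h₁(x, 0) = 0 and ∂ₜ h₁(x, t) = −Σᵢ k(x, xᵢ)(h₁(xᵢ, t) − Yᵢ)), and h₂ : Ω × [0, ∞) → ℝ solves the same flow with labels (h_ini(x₁), …, h_ini(xₙ)) and zero initial function. Then g(x, t) := h₁(x, t) + h_ini(x) − h₂(x, t) solves the mean-squared-error kernel flow with labels Y and initial function h_ini: g(x, 0) = h_ini(x) and ∂ₜ g(x, t) = −Σᵢ k(x, xᵢ)(g(xᵢ, t) − Yᵢ) for all x ∈ Ω and t ≥ 0. -/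

import Mathlib

open Filter Topology

/-- Decomposition of the MSE kernel flow with nonzero initial output: if `h₁` solves the
flow with labels `Y` from zero and `h₂` solves the flow with labels `h_ini(X)` from
zero, then `g = h₁ + h_ini - h₂` solves the flow with labels `Y` and initial function
`h_ini`. -/
theorem stmt7 {Ω : Type*} {n : ℕ} (k : Ω → Ω → ℝ) (x : Fin n → Ω)
    (Y : Fin n → ℝ) (hini : Ω → ℝ) (h₁ h₂ : Ω → ℝ → ℝ)
    (hinit₁ : ∀ x' : Ω, h₁ x' 0 = 0)
    (hinit₂ : ∀ x' : Ω, h₂ x' 0 = 0)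
    (hflow₁ : ∀ (x' : Ω) (t : ℝ), 0 ≤ t →
      HasDerivAt (h₁ x') (-(∑ i, k x' (x i) * (h₁ (x i) t - Y i))) t)
    (hflow₂ : ∀ (x' : Ω) (t : ℝ), 0 ≤ t →
      HasDerivAt (h₂ x') (-(∑ i, k x' (x i) * (h₂ (x i) t - hini (x i)))) t) :
    (∀ x' : Ω, h₁ x' 0 + hini x' - h₂ x' 0 = hini x') ∧
    ∀ (x' : Ω) (t : ℝ), 0 ≤ t →
      HasDerivAt (fun s => h₁ x' s + hini x' - h₂ x' s)
        (-(∑ i, k x' (x i) * ((h₁ (x i) t + hini (x i) - h₂ (x i) t) - Y i))) t := by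
  constructor
  · intro x'; rw [hinit₁, hinit₂]; ring
  · intro x' t ht
    have h := ((hflow₁ x' t ht).add_const (hini x')).sub (hflow₂ x' t ht)
    convert h using 1
    case e'_4 => rfl
    case e'_5 => rfl
    case e'_8 => rfl
    have e : ∑ i, k x' (x i) * ((h₁ (x i) t + hini (x i) - h₂ (x i) t) - Y i)
        = ∑ i, (k x' (x i) * (h₁ (x i) t - Y i) - k x' (x i) * (h₂ (x i) t - hini (x i))) :=
      Finset.sum_congr rfl (by intros; ring)
    rw [e, Finset.sum_sub_distrib]
    ring
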